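/- Let G be a finite non-nilpotent group with nil(G) = 1 such that |nil_G(x)| = |nil_G(y)| for all nontrivial x, y ∈ G. Then every element of G has prime power order. -/

import Mathlib

def nilizer {G : Type*} [Group G] (x : G) : Set G :=
  {g | Group.IsNilpotent (Subgroup.closure ({x, g} : Set G))}

def nilSet (G : Type*) [Group G] : Set G :=
  {x | ∀ y : G, Group.IsNilpotent (Subgroup.closure ({x, y} : Set G))}

section Basic

variable {G : Type*} [Group G]

lemma mem_nilizer {x g : G} :
    g ∈ nilizer x ↔ Group.IsNilpotent (Subgroup.closure ({x, g} : Set G)) := Iff.rfl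

lemma nilizer_symm {x g : G} (h : g ∈ nilizer x) : x ∈ nilizer g := by
  rw [mem_nilizer, Set.pair_comm]; exact h

lemma nilpotent_of_le {H K : Subgroup G} (hle : H ≤ K) (hK : Group.IsNilpotent K) :
    Group.IsNilpotent H := by
  haveI := hK
  exact nilpotent_of_mulEquiv (Subgroup.subgroupOfEquivOfLe hle)

lemma nilizer_subset_pow (x : G) (k : ℕ) : nilizer x ⊆ nilizer (x ^ k) := by
  intro g hg
  rw [mem_nilizer]
  refine nilpotent_of_le (Subgroup.closure_le _ |>.mpr ?_) hg
  rintro y (rfl | rfl)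
  · exact Subgroup.pow_mem _ (Subgroup.subset_closure (by simp)) k
  · exact Subgroup.subset_closure (by simp)

lemma commute_mem_nilizer {x g : G} (h : Commute x g) : g ∈ nilizer x := by
  rw [mem_nilizer]
  haveI : IsMulCommutative (Subgroup.closure ({x, g} : Set G)) := by
    refine ⟨⟨fun a b => ?_⟩⟩
    have key : ∀ c ∈ Subgroup.closure ({x, g} : Set G),
        ∀ d ∈ Subgroup.closure ({x, g} : Set G), Commute c d := by
      intro c hc
      induction hc using Subgroup.closure_induction with
      | mem c hc =>
        intro d hd
        induction hd using Subgroup.closure_induction with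
        | mem d hd =>
          rcases hc with rfl | rfl <;> rcases hd with rfl | rfl
          · exact Commute.refl _
          · exact h
          · exact h.symm
          · exact Commute.refl _
        | one => exact Commute.one_right _
        | mul d e _ _ hd he => exact hd.mul_right he
        | inv d _ hd => exact hd.inv_right
      | one => exact fun d _ => Commute.one_left _
      | mul c e _ _ hc he => exact fun d hd => (hc d hd).mul_left (he d hd)
      | inv c _ hc => exact fun d hd => (hc d hd).inv_left
    exact Subtype.ext (key a a.2 b b.2)
  open IsMulCommutative in infer_instance

lemma conj_mem_nilizer {x g : G} (c : G) (h : g ∈ nilizer x) :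
    c * g * c⁻¹ ∈ nilizer (c * x * c⁻¹) := by
  rw [mem_nilizer]
  have himg : ({c * x * c⁻¹, c * g * c⁻¹} : Set G) = ((MulAut.conj c).toMonoidHom : G →* G) '' {x, g} := by
    rw [Set.image_pair]; rfl
  rw [himg, ← MonoidHom.map_closure]
  haveI : Group.IsNilpotent (Subgroup.closure ({x, g} : Set G)) := h
  exact nilpotent_of_mulEquiv
    (Subgroup.equivMapOfInjective _ _ (MulAut.conj c).injective)

end Basic
section Reg

variable {G : Type*} [Group G] [Finite G]

/-- With the regularity hypothesis, nilizers of nontrivial powers agree. -/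
lemma nilizer_pow_eq
    (hreg : ∀ x y : G, x ≠ 1 → y ≠ 1 → (nilizer x).ncard = (nilizer y).ncard)
    {x : G} (k : ℕ) (hx : x ≠ 1) (hxk : x ^ k ≠ 1) :
    nilizer (x ^ k) = nilizer x :=
  (Set.eq_of_subset_of_ncard_le (nilizer_subset_pow x k)
    (le_of_eq (hreg _ _ hxk hx)) (Set.toFinite _)).symm

/-- the `r`-part of an element -/
lemma primePart {g : G} {r : ℕ} (hr : r.Prime) (hdvd : r ∣ orderOf g) :
    orderOf (g ^ (orderOf g / r ^ ((orderOf g).factorization r)))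
        = r ^ ((orderOf g).factorization r) ∧
      g ^ (orderOf g / r ^ ((orderOf g).factorization r)) ≠ 1 ∧
      1 ≤ (orderOf g).factorization r := by
  have hpos : 0 < orderOf g := orderOf_pos g
  have hdvd' : orderOf g / r ^ ((orderOf g).factorization r) ∣ orderOf g :=
    Nat.div_dvd_of_dvd (Nat.ordProj_dvd _ _)
  have h1 : orderOf (g ^ (orderOf g / r ^ ((orderOf g).factorization r)))
      = r ^ ((orderOf g).factorization r) := by
    rw [orderOf_pow, Nat.gcd_eq_right hdvd']
    rw [Nat.div_div_self (Nat.ordProj_dvd _ _) hpos.ne']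
  have hfac : 1 ≤ (orderOf g).factorization r :=
    (Nat.Prime.dvd_iff_one_le_factorization hr hpos.ne').mp hdvd
  refine ⟨h1, ?_, hfac⟩
  intro hone
  rw [← orderOf_eq_one_iff, h1] at hone
  have := Nat.one_lt_pow (n := (orderOf g).factorization r) (by omega) hr.one_lt
  omega

omit [Finite G] in
/-- CRT: if `a b` commute and have coprime orders, `a` is a power of `a * b`. -/
lemma exists_pow_eq {a b : G} (h : Commute a b)
    (hco : Nat.Coprime (orderOf a) (orderOf b)) : ∃ k, (a * b) ^ k = a := by
  obtain ⟨k, hk1, hk0⟩ := Nat.chineseRemainder hco 1 0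
  refine ⟨k, ?_⟩
  rw [h.mul_pow]
  have ha : a ^ k = a ^ 1 := by
    rw [pow_eq_pow_iff_modEq]; exact hk1
  have hb : b ^ k = b ^ 0 := by
    rw [pow_eq_pow_iff_modEq]; exact hk0
  rw [ha, hb, pow_one, pow_zero, mul_one]

/-- In a nilpotent 2-generated group, generators of coprime prime-power order commute. -/
lemma commute_of_nilpotent_coprime {p q : ℕ} (hp : p.Prime) (hq : q.Prime) (hpq : p ≠ q)
    {a b : G} {α β : ℕ} (ha : orderOf a = p ^ α) (hb : orderOf b = q ^ β)
    (hnil : Group.IsNilpotent (Subgroup.closure ({a, b} : Set G))) : Commute a b := by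
  haveI : Fact p.Prime := ⟨hp⟩
  haveI : Fact q.Prime := ⟨hq⟩
  set H := Subgroup.closure ({a, b} : Set G) with hH
  have haH : a ∈ H := Subgroup.subset_closure (by simp)
  have hbH : b ∈ H := Subgroup.subset_closure (by simp)
  set a' : H := ⟨a, haH⟩
  set b' : H := ⟨b, hbH⟩
  have hpa : IsPGroup p (Subgroup.zpowers a') := by
    apply IsPGroup.of_card (n := α)
    rw [Nat.card_zpowers, Subgroup.orderOf_mk, ha]
  have hpb : IsPGroup q (Subgroup.zpowers b') := by
    apply IsPGroup.of_card (n := β)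
    rw [Nat.card_zpowers, Subgroup.orderOf_mk, hb]
  obtain ⟨P, hP⟩ := hpa.exists_le_sylow
  obtain ⟨Q, hQ⟩ := hpb.exists_le_sylow
  haveI : Group.IsNilpotent H := hnil
  have hnorm := ((isNilpotent_of_finite_tfae (G := H)).out 0 3).mp hnil
  have hPn : (P : Subgroup H).Normal := hnorm p ⟨hp⟩ P
  have hQn : (Q : Subgroup H).Normal := hnorm q ⟨hq⟩ Q
  have hdis : Disjoint (P : Subgroup H) (Q : Subgroup H) :=
    IsPGroup.disjoint_of_ne p q hpq _ _ P.isPGroup' Q.isPGroup'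
  have hcomm : Commute a' b' :=
    Subgroup.commute_of_normal_of_disjoint _ _ hPn hQn hdis a' b'
      (hP (Subgroup.mem_zpowers a')) (hQ (Subgroup.mem_zpowers b'))
  have := congrArg (Subtype.val) hcomm
  exact (by simpa [a', b'] using this : a * b = b * a)

/-- key: if `a b` commute, are nontrivial with coprime orders, their nilizers agree. -/
lemma nilizer_eq_of_commute
    (hreg : ∀ x y : G, x ≠ 1 → y ≠ 1 → (nilizer x).ncard = (nilizer y).ncard)
    {a b : G} (h : Commute a b) (hco : Nat.Coprime (orderOf a) (orderOf b))
    (ha : a ≠ 1) (hb : b ≠ 1) : nilizer a = nilizer b := by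
  have hab : a * b ≠ 1 := by
    intro habs
    rw [mul_eq_one_iff_eq_inv] at habs
    have horder : orderOf a = orderOf b := by rw [habs, orderOf_inv]
    rw [horder, Nat.Coprime, Nat.gcd_self] at hco
    exact hb (orderOf_eq_one_iff.mp hco)
  have hba : b * a = a * b := h.eq.symm
  obtain ⟨k, hk⟩ := exists_pow_eq h hco
  obtain ⟨l, hl⟩ := exists_pow_eq h.symm hco.symm
  have h1 : nilizer ((a * b) ^ k) = nilizer (a * b) :=
    nilizer_pow_eq hreg k hab (by rw [hk]; exact ha)
  have h2 : nilizer ((b * a) ^ l) = nilizer (b * a) :=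
    nilizer_pow_eq hreg l (by rw [hba]; exact hab) (by rw [hl]; exact hb)
  rw [hk] at h1
  rw [hl, hba] at h2
  exact h1.trans h2.symm

end Reg
section Special

variable {G : Type*} [Group G] [Finite G]

open Subgroup

lemma nilizer_special
    (hreg : ∀ x y : G, x ≠ 1 → y ≠ 1 → (nilizer x).ncard = (nilizer y).ncard)
    {p q : ℕ} (hp : p.Prime) (hq : q.Prime) (hpq : p ≠ q)
    {u v : G} (hu : u ≠ 1) (hv : v ≠ 1)
    {α β : ℕ} (hou : orderOf u = p ^ α) (hov : orderOf v = q ^ β)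
    (huv : nilizer u = nilizer v) :
    ∀ g ∈ nilizer u, g ≠ 1 → nilizer g = nilizer u := by
  intro g hg hg1
  have hn1 : orderOf g ≠ 1 := fun h => hg1 (orderOf_eq_one_iff.mp h)
  set r := (orderOf g).minFac with hrdef
  have hr : r.Prime := Nat.minFac_prime hn1
  have hrd : r ∣ orderOf g := Nat.minFac_dvd _
  obtain ⟨hord, hne, hfac⟩ := primePart (g := g) hr hrd
  set gr := g ^ (orderOf g / r ^ ((orderOf g).factorization r)) with hgrdef
  have hng : nilizer gr = nilizer g := nilizer_pow_eq hreg _ hg1 hne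
  have hu_gr : u ∈ nilizer gr := by rw [hng]; exact nilizer_symm hg
  have hv_gr : v ∈ nilizer gr := by
    rw [hng]; exact nilizer_symm (huv ▸ hg)
  by_cases hrp : r = p
  · -- use v : r ≠ q
    have hrq : r ≠ q := by rw [hrp]; exact hpq
    have hgrv : gr ∈ nilizer v := nilizer_symm hv_gr
    have hcomm : Commute v gr :=
      commute_of_nilpotent_coprime hq hr (Ne.symm hrq) hov hord hgrv
    have hco : Nat.Coprime (orderOf v) (orderOf gr) := by
      rw [hov, hord]
      exact Nat.Coprime.pow _ _ ((Nat.coprime_primes hq hr).mpr (Ne.symm hrq))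
    have hkey : nilizer v = nilizer gr := nilizer_eq_of_commute hreg hcomm hco hv hne
    exact (hng.symm.trans hkey.symm).trans huv.symm
  · -- use u : r ≠ p
    have hgru : gr ∈ nilizer u := nilizer_symm hu_gr
    have hcomm : Commute u gr :=
      commute_of_nilpotent_coprime hp hr (Ne.symm hrp) hou hord hgru
    have hco : Nat.Coprime (orderOf u) (orderOf gr) := by
      rw [hou, hord]
      exact Nat.Coprime.pow _ _ ((Nat.coprime_primes hp hr).mpr (Ne.symm hrp))
    have hkey : nilizer u = nilizer gr := nilizer_eq_of_commute hreg hcomm hco hu hne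
    exact hng.symm.trans hkey.symm

omit [Finite G] in
lemma nilizer_subgroup {u : G}
    (hsp : ∀ g ∈ nilizer u, g ≠ 1 → nilizer g = nilizer u) :
    ∃ N : Subgroup G, (N : Set G) = nilizer u := by
  refine ⟨{ carrier := nilizer u, one_mem' := ?g1, mul_mem' := ?g2, inv_mem' := ?g3 }, rfl⟩
  case g1 => exact commute_mem_nilizer (Commute.one_right u)
  case g3 =>
    intro a ha
    by_cases ha1 : a = 1
    · subst ha1; simpa using ha
    · have : a⁻¹ ∈ nilizer a := commute_mem_nilizer (Commute.inv_right (Commute.refl a))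
      rw [hsp a ha ha1] at this
      exact this
  case g2 =>
    intro a b ha hb
    by_cases ha1 : a = 1
    · subst ha1; simpa using hb
    · have hna : nilizer a = nilizer u := hsp a ha ha1
      have hb' : b ∈ nilizer a := by rw [hna]; exact hb
      have hnil : Group.IsNilpotent (closure ({a, b} : Set G)) := hb'
      have hmem : a * b ∈ nilizer a := by
        rw [mem_nilizer]
        refine nilpotent_of_le ((closure_le _).mpr ?_) hnil
        rintro y (rfl | rfl)
        · exact subset_closure (by simp)
        · exact Subgroup.mul_mem _ (subset_closure (by simp)) (subset_closure (by simp))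
      rw [hna] at hmem
      exact hmem

lemma prime_dvd_M
    (hreg : ∀ x y : G, x ≠ 1 → y ≠ 1 → (nilizer x).ncard = (nilizer y).ncard)
    {x₀ : G} (hx₀ : x₀ ≠ 1) {r : ℕ} (hr : r.Prime)
    (hrG : r ∣ Nat.card G) : r ∣ (nilizer x₀).ncard := by
  by_contra hnd
  haveI : Fact r.Prime := ⟨hr⟩
  obtain ⟨h, hh⟩ := exists_prime_orderOf_dvd_card' r hrG
  have hh1 : h ≠ 1 := by
    intro e; rw [e, orderOf_one] at hh; exact hr.one_lt.ne' hh.symm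
  set C := Subgroup.centralizer ({h} : Set G) with hCdef
  have hhC : h ∈ C := by
    rw [hCdef]
    exact Subgroup.mem_centralizer_iff.mpr (by
      rintro a ha; rw [Set.mem_singleton_iff] at ha; rw [ha])
  -- every element of the centralizer of h has r-power order
  have hCord : ∀ t : G, t ∈ C → ∃ k, orderOf t = r ^ k := by
    intro t htC
    rcases eq_or_ne t 1 with rfl | ht1
    · exact ⟨0, by simp⟩
    have hcomm_ht : Commute h t := Subgroup.mem_centralizer_iff.mp htC h (by simp)
    have hall : ∀ {s : ℕ}, s.Prime → s ∣ orderOf t → s = r := by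
      intro s hs hsd
      by_contra hsr
      obtain ⟨hords, hnes, _⟩ := primePart hs hsd
      set ts := t ^ (orderOf t / s ^ ((orderOf t).factorization s)) with htsdef
      have hcomm2 : Commute h ts := hcomm_ht.pow_right _
      have hco : Nat.Coprime (orderOf h) (orderOf ts) := by
        rw [hh, hords]
        exact Nat.Coprime.pow_right _ ((Nat.coprime_primes hr hs).mpr (fun e => hsr e.symm))
      have heq : nilizer h = nilizer ts := nilizer_eq_of_commute hreg hcomm2 hco hh1 hnes
      have hsp := nilizer_special hreg hr hs (fun e => hsr e.symm) hh1 hnes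
        (α := 1) (by rw [pow_one]; exact hh) hords heq
      obtain ⟨N, hN⟩ := nilizer_subgroup hsp
      have hhN : h ∈ N := by
        rw [← SetLike.mem_coe, hN]
        exact commute_mem_nilizer (Commute.refl h)
      have hdvd : orderOf h ∣ Nat.card N := Subgroup.orderOf_dvd_natCard N hhN
      rw [hh] at hdvd
      have hcard : Nat.card N = (nilizer x₀).ncard := by
        rw [← hreg h x₀ hh1 hx₀, ← Nat.card_coe_set_eq, ← hN]
        rfl
      rw [hcard] at hdvd
      exact hnd hdvd
    refine ⟨(orderOf t).primeFactorsList.length, ?_⟩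
    exact Nat.eq_prime_pow_of_unique_prime_dvd (orderOf_pos t).ne' hall
  have hCp : IsPGroup r C := by
    rw [IsPGroup.iff_orderOf]
    intro g
    obtain ⟨k, hk⟩ := hCord g g.2
    exact ⟨k, by rwa [← Subgroup.orderOf_coe g]⟩
  -- C acts on nilizer h by conjugation
  letI : MulAction C {y : G // y ∈ nilizer h} :=
    { smul := fun c g => ⟨(c : G) * g * (c : G)⁻¹, by
        have hch : (c : G) * h * (c : G)⁻¹ = h := by
          have hcomm : h * (c : G) = (c : G) * h :=
            Subgroup.mem_centralizer_iff.mp c.2 h (by simp)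
          rw [← hcomm]; group
        have := conj_mem_nilizer (c : G) g.2
        rwa [hch] at this⟩
      one_smul := fun g => Subtype.ext (by
        show ((1 : C) : G) * g * ((1 : C) : G)⁻¹ = g
        simp)
      mul_smul := fun c d g => Subtype.ext (by
        show ((c * d : C) : G) * g * ((c * d : C) : G)⁻¹ =
          (c : G) * ((d : G) * g * (d : G)⁻¹) * (c : G)⁻¹
        simp [mul_assoc]) }
  have hmod := hCp.card_modEq_card_fixedPoints {y : G // y ∈ nilizer h}
  -- fixed points are exactly the center of C
  have hfixcard : Nat.card (MulAction.fixedPoints C {y : G // y ∈ nilizer h})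
      = Nat.card (Subgroup.center C) := by
    apply Nat.card_congr
    refine ⟨fun x => ⟨⟨x.1.1, ?_⟩, ?_⟩, fun z => ⟨⟨z.1.1, ?_⟩, ?_⟩, ?_, ?_⟩
    · -- x.1.1 ∈ C
      refine Subgroup.mem_centralizer_iff.mpr ?_
      rintro a ha; rw [Set.mem_singleton_iff] at ha; rw [ha]
      have := x.2 ⟨h, hhC⟩
      have heq : h * x.1.1 * h⁻¹ = x.1.1 := congrArg Subtype.val this
      calc h * x.1.1 = (h * x.1.1 * h⁻¹) * h := by group
        _ = x.1.1 * h := by rw [heq]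
    · -- centrality
      rw [Subgroup.mem_center_iff]
      intro c
      have := x.2 c
      have heq : (c : G) * x.1.1 * (c : G)⁻¹ = x.1.1 := congrArg Subtype.val this
      refine Subtype.ext ?_
      show (c : G) * x.1.1 = x.1.1 * (c : G)
      calc (c : G) * x.1.1 = ((c : G) * x.1.1 * (c : G)⁻¹) * (c : G) := by group
        _ = x.1.1 * (c : G) := by rw [heq]
    · -- z.1.1 ∈ nilizer h
      have hzC : (z.1 : G) ∈ C := z.1.2
      have hcomm : Commute h (z.1 : G) :=
        Subgroup.mem_centralizer_iff.mp hzC h (by simp)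
      exact commute_mem_nilizer hcomm
    · -- fixed
      intro c
      have hcz := (Subgroup.mem_center_iff.mp z.2) c
      have : (c : G) * z.1.1 = z.1.1 * (c : G) := congrArg Subtype.val hcz
      refine Subtype.ext ?_
      show (c : G) * z.1.1 * (c : G)⁻¹ = z.1.1
      rw [this]; group
    · intro x; rfl
    · intro z; rfl
  haveI : Nontrivial C := ⟨⟨⟨h, hhC⟩, 1, by
    intro e
    exact hh1 (congrArg Subtype.val e)⟩⟩
  haveI : Nontrivial (Subgroup.center C) := hCp.center_nontrivial
  obtain ⟨k, hk0, hkcard⟩ :=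
    ((hCp.to_subgroup (Subgroup.center C)).nontrivial_iff_card).mp inferInstance
  have hrdvdZ : r ∣ Nat.card (Subgroup.center C) := hkcard ▸ dvd_pow_self r hk0.ne'
  have hrfix : r ∣ Nat.card (MulAction.fixedPoints C {y : G // y ∈ nilizer h}) := by
    rw [hfixcard]; exact hrdvdZ
  have hrnil : r ∣ Nat.card {y : G // y ∈ nilizer h} :=
    (Nat.modEq_zero_iff_dvd).mp (hmod.trans ((Nat.modEq_zero_iff_dvd).mpr hrfix))
  have : r ∣ (nilizer x₀).ncard := by
    rwa [Nat.card_coe_set_eq, hreg h x₀ hh1 hx₀] at hrnil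
  exact hnd this

end Special
theorem stmt15 {G : Type*} [Group G] [Finite G]
    (hnn : ¬ Group.IsNilpotent G) (hnil : nilSet G = {1})
    (hreg : ∀ x y : G, x ≠ 1 → y ≠ 1 → (nilizer x).ncard = (nilizer y).ncard) :
    ∀ x : G, ∃ (p n : ℕ), p.Prime ∧ orderOf x = p ^ n := by
  intro x
  rcases eq_or_ne (orderOf x) 1 with h1 | hn1
  · exact ⟨2, 0, Nat.prime_two, by rw [h1, pow_zero]⟩
  have hpp : (orderOf x).minFac.Prime := Nat.minFac_prime hn1
  set p := (orderOf x).minFac with hpdef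
  have hpd : p ∣ orderOf x := Nat.minFac_dvd _
  have hnpos : orderOf x ≠ 0 := (orderOf_pos x).ne'
  rcases eq_or_ne (orderOf x / p ^ ((orderOf x).factorization p)) 1 with hm1 | hm1
  · -- orderOf x is a prime power
    refine ⟨p, (orderOf x).factorization p, hpp, ?_⟩
    have hself := Nat.ordProj_mul_ordCompl_eq_self (orderOf x) p
    rw [hm1, mul_one] at hself
    exact hself.symm
  · exfalso
    have hx1 : x ≠ 1 := fun e => hn1 (by rw [e, orderOf_one])
    set m := orderOf x / p ^ ((orderOf x).factorization p) with hmdef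
    have hqq : m.minFac.Prime := Nat.minFac_prime hm1
    set q := m.minFac with hqdef
    have hqm : q ∣ m := Nat.minFac_dvd m
    have hmd : m ∣ orderOf x := Nat.div_dvd_of_dvd (Nat.ordProj_dvd _ p)
    have hqn : q ∣ orderOf x := hqm.trans hmd
    have hqp : q ≠ p := by
      intro e
      have hnd : ¬ p ∣ m := Nat.not_dvd_ordCompl hpp hnpos
      exact hnd (e ▸ hqm)
    obtain ⟨hou, hune, _⟩ := primePart (g := x) hpp hpd
    obtain ⟨hov, hvne, _⟩ := primePart (g := x) hqq hqn
    set u := x ^ (orderOf x / p ^ ((orderOf x).factorization p)) with hudef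
    set v := x ^ (orderOf x / q ^ ((orderOf x).factorization q)) with hvdef
    have h1 : nilizer u = nilizer x := nilizer_pow_eq hreg _ hx1 hune
    have h2 : nilizer v = nilizer x := nilizer_pow_eq hreg _ hx1 hvne
    have huv : nilizer u = nilizer v := h1.trans h2.symm
    have hsp := nilizer_special hreg hpp hqq (Ne.symm hqp) hune hvne hou hov huv
    obtain ⟨N, hN⟩ := nilizer_subgroup hsp
    have hcardN : Nat.card N = (nilizer u).ncard := by
      rw [← Nat.card_coe_set_eq, ← hN]; rfl
    have hN0 : Nat.card N ≠ 0 := Nat.card_pos.ne'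
    have hG0 : Nat.card G ≠ 0 := Nat.card_pos.ne'
    -- every prime power dividing |G| divides |N|
    have hkey : ∀ r : ℕ, r.Prime →
        r ^ ((Nat.card G).factorization r) ∣ Nat.card N := by
      intro r hr
      by_cases hrG : r ∣ Nat.card G
      swap
      · rw [Nat.factorization_eq_zero_of_not_dvd hrG, pow_zero]
        exact one_dvd _
      haveI : Fact r.Prime := ⟨hr⟩
      have hrM : r ∣ (nilizer u).ncard := prime_dvd_M hreg hune hr hrG
      have hrN : r ∣ Nat.card N := by rw [hcardN]; exact hrM
      obtain ⟨w, hw⟩ := exists_prime_orderOf_dvd_card' (G := N) r hrN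
      have hw' : orderOf (w : G) = r := by rw [Subgroup.orderOf_coe]; exact hw
      have hwne : (w : G) ≠ 1 := by
        intro e; rw [e, orderOf_one] at hw'; exact hr.one_lt.ne' hw'.symm
      have hwmem : (w : G) ∈ nilizer u := by
        rw [← hN]; exact w.2
      have hpg : IsPGroup r (Subgroup.zpowers (w : G)) := by
        apply IsPGroup.of_card (n := 1)
        rw [Nat.card_zpowers, hw', pow_one]
      obtain ⟨R, hR⟩ := hpg.exists_le_sylow
      have hRsub : (R : Subgroup G) ≤ N := by
        intro t ht
        rw [← SetLike.mem_coe, hN]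
        have hWR : (w : G) ∈ (R : Subgroup G) := hR (Subgroup.mem_zpowers _)
        have hclle : Subgroup.closure ({(w : G), t} : Set G) ≤ (R : Subgroup G) := by
          rw [Subgroup.closure_le]
          rintro y (rfl | rfl)
          · exact hWR
          · exact ht
        haveI : Group.IsNilpotent (R : Subgroup G) := R.isPGroup'.isNilpotent
        have htnil : t ∈ nilizer (w : G) := nilpotent_of_le hclle inferInstance
        rw [hsp (w : G) hwmem hwne] at htnil
        exact htnil
      have hcardR : Nat.card (R : Subgroup G) = r ^ ((Nat.card G).factorization r) :=
        R.card_eq_multiplicity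
      rw [← hcardR]
      exact Subgroup.card_dvd_of_le hRsub
    have hNdvd : Nat.card G ∣ Nat.card N := by
      rw [← Nat.factorization_le_iff_dvd hG0 hN0]
      intro r
      by_cases hr : r.Prime
      · exact (Nat.Prime.pow_dvd_iff_le_factorization hr hN0).mp (hkey r hr)
      · rw [Nat.factorization_eq_zero_of_not_prime _ hr]
        exact Nat.zero_le _
    have hNtop : N = ⊤ :=
      Subgroup.eq_top_of_card_eq N
        (Nat.dvd_antisymm (Subgroup.card_subgroup_dvd_card N) hNdvd)
    have hu_nilset : u ∈ nilSet G := by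
      intro y
      have hy : y ∈ nilizer u := by
        rw [← hN, hNtop]
        exact Subgroup.mem_top y
      exact hy
    rw [hnil] at hu_nilset
    exact hune hu_nilset
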